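/- In flat Euclidean ℝⁿ (n ≥ 3), if a local diffeomorphism f: U → ℝⁿ maps every straight line and every round circle (i.e., every conformal circle of the flat metric) into a straight line or round circle, and df never annihilates the stated orthogonality structure, then for each point x and each pair of orthogonal vectors v ⊥ u in ℝⁿ one has ⟨df_x(v), df_x(u)⟩ = 0; hence df_x is a conformal linear map at every point. -/

import Mathlib

open scoped RealInnerProductSpace

/-- Conformal circles of flat ℝⁿ: straight lines and round planar circles. -/
def IsFlatConformalCircle {n : ℕ} (C : Set (EuclideanSpace ℝ (Fin n))) : Prop :=
  (∃ p v : EuclideanSpace ℝ (Fin n), v ≠ 0 ∧ C = Set.range fun t : ℝ => p + t • v) ∨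
  (∃ (c u₁ u₂ : EuclideanSpace ℝ (Fin n)) (R : ℝ), 0 < R ∧
    ⟪u₁, u₁⟫ = 1 ∧ ⟪u₂, u₂⟫ = 1 ∧ ⟪u₁, u₂⟫ = 0 ∧
    C = Set.range fun t : ℝ => c + (R * Real.cos t) • u₁ + (R * Real.sin t) • u₂)


-- uniqueness of derivatives of functions agreeing on an open interval
lemma deriv_unique_on {E : Type*} [NormedAddCommGroup E] [NormedSpace ℝ E]
    {σ ρ : ℝ → E} {D D' : E} {ε t : ℝ} (ht : |t| < ε)
    (hσ : HasDerivAt σ D t) (hρ : HasDerivAt ρ D' t)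
    (hEq : ∀ s, |s| < ε → σ s = ρ s) : D = D' := by
  have hmem : Set.Ioo (-ε) ε ∈ nhds t := Ioo_mem_nhds (by cases abs_lt.1 ht; linarith)
    (by cases abs_lt.1 ht; linarith)
  have : σ =ᶠ[nhds t] ρ := Filter.eventuallyEq_of_mem hmem
    (fun s hs => hEq s (abs_lt.2 ⟨hs.1, hs.2⟩))
  exact (hσ.congr_of_eventuallyEq this.symm).unique hρ

theorem key_constraint {n : ℕ} {C' : Set (EuclideanSpace ℝ (Fin n))}
    (hC' : IsFlatConformalCircle C')
    {σ σ₁ σ₂ : ℝ → EuclideanSpace ℝ (Fin n)} {d₃ : EuclideanSpace ℝ (Fin n)} {ε : ℝ}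
    (hε : 0 < ε)
    (h1 : ∀ t, |t| < ε → HasDerivAt σ (σ₁ t) t)
    (h2 : ∀ t, |t| < ε → HasDerivAt σ₁ (σ₂ t) t)
    (h3 : HasDerivAt σ₂ d₃ 0)
    (hmem : ∀ t, |t| < ε → σ t ∈ C')
    (he : σ₁ 0 ≠ 0) :
    ⟪σ₁ 0, σ₁ 0⟫ • (⟪σ₁ 0, σ₁ 0⟫ • d₃ - ⟪d₃, σ₁ 0⟫ • σ₁ 0) =
      (3 * ⟪σ₂ 0, σ₁ 0⟫) • (⟪σ₁ 0, σ₁ 0⟫ • σ₂ 0 - ⟪σ₂ 0, σ₁ 0⟫ • σ₁ 0) := by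
  have h0ε : |(0:ℝ)| < ε := by simpa using hε
  rcases hC' with ⟨p, w, hw, hC⟩ | ⟨c, u₁, u₂, R, hR, h11, h22, h12, hC⟩
  · -- line case
    have hline : ∀ t, |t| < ε → σ t = p + (⟪σ t - p, w⟫ / ⟪w, w⟫) • w := by
      intro t ht
      obtain ⟨r, hr⟩ := hC ▸ hmem t ht
      have hw2 : ⟪w, w⟫ ≠ 0 := fun h => hw (inner_self_eq_zero.1 h)
      rw [← hr]
      simp only [add_sub_cancel_left, real_inner_smul_left]
      rw [mul_div_assoc, div_self hw2, mul_one]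
    -- first derivative
    have hτ : ∀ t, |t| < ε → HasDerivAt (fun s => p + (⟪σ s - p, w⟫ / ⟪w, w⟫) • w)
        ((⟪σ₁ t, w⟫ / ⟪w, w⟫) • w) t := by
      intro t ht
      have h := (((h1 t ht).sub_const p).inner ℝ (hasDerivAt_const t w)).div_const ⟪w, w⟫
      simp only [inner_zero_right, add_zero, zero_add] at h
      exact (h.smul_const w).const_add p
    have hs1 : ∀ t, |t| < ε → σ₁ t = (⟪σ₁ t, w⟫ / ⟪w, w⟫) • w := by
      intro t ht
      exact deriv_unique_on ht (h1 t ht) (hτ t ht) hline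
    -- second derivative
    have hτ2 : ∀ t, |t| < ε → HasDerivAt (fun s => (⟪σ₁ s, w⟫ / ⟪w, w⟫) • w)
        ((⟪σ₂ t, w⟫ / ⟪w, w⟫) • w) t := by
      intro t ht
      have h := (((h2 t ht)).inner ℝ (hasDerivAt_const t w)).div_const ⟪w, w⟫
      simp only [inner_zero_right, add_zero, zero_add] at h
      exact h.smul_const w
    have hs2 : ∀ t, |t| < ε → σ₂ t = (⟪σ₂ t, w⟫ / ⟪w, w⟫) • w := by
      intro t ht
      exact deriv_unique_on ht (h2 t ht) (hτ2 t ht) hs1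
    -- third derivative
    have hτ3 : HasDerivAt (fun s => (⟪σ₂ s, w⟫ / ⟪w, w⟫) • w) ((⟪d₃, w⟫ / ⟪w, w⟫) • w) 0 := by
      have h := ((h3.inner ℝ (hasDerivAt_const 0 w))).div_const ⟪w, w⟫
      simp only [inner_zero_right, add_zero, zero_add] at h
      exact h.smul_const w
    have hs3 : d₃ = (⟪d₃, w⟫ / ⟪w, w⟫) • w :=
      deriv_unique_on h0ε h3 hτ3 hs2
    -- now everything is a multiple of w
    set a := ⟪σ₁ 0, w⟫ / ⟪w, w⟫
    set b := ⟪σ₂ 0, w⟫ / ⟪w, w⟫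
    set d := ⟪d₃, w⟫ / ⟪w, w⟫
    rw [hs1 0 h0ε, hs2 0 h0ε, hs3]
    simp only [real_inner_smul_left, real_inner_smul_right]
    match_scalars <;> ring
  · -- circle case
    have hmem' : ∀ t, |t| < ε → σ t ∈ Set.range fun s : ℝ =>
        c + (R * Real.cos s) • u₁ + (R * Real.sin s) • u₂ := by
      intro t ht; have := hmem t ht; rwa [hC] at this
    have hu2 : ⟪u₂, u₁⟫ = 0 := by rw [real_inner_comm]; exact h12
    set p : ℝ → ℝ := fun t => ⟪σ t - c, u₁⟫ with hp
    set q : ℝ → ℝ := fun t => ⟪σ t - c, u₂⟫ with hq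
    -- representation and radius constraint
    have hrep : ∀ t, |t| < ε → σ t = c + p t • u₁ + q t • u₂ := by
      intro t ht
      obtain ⟨θ, hθ⟩ := hmem' t ht
      have hst : σ t - c = (R * Real.cos θ) • u₁ + (R * Real.sin θ) • u₂ := by
        rw [← hθ]; simp only [add_assoc, add_sub_cancel_left]
      have hpt : p t = R * Real.cos θ := by
        rw [hp]; simp only [hst, inner_add_left, real_inner_smul_left, h11, hu2]; ring
      have hqt : q t = R * Real.sin θ := by
        rw [hq]; simp only [hst, inner_add_left, real_inner_smul_left, h12, h22]; ring
      rw [hpt, hqt, ← hθ]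
    have hr0 : ∀ t, |t| < ε → p t * p t + q t * q t = R * R := by
      intro t ht
      obtain ⟨θ, hθ⟩ := hmem' t ht
      have hst : σ t - c = (R * Real.cos θ) • u₁ + (R * Real.sin θ) • u₂ := by
        rw [← hθ]; simp only [add_assoc, add_sub_cancel_left]
      have hpt : p t = R * Real.cos θ := by
        rw [hp]; simp only [hst, inner_add_left, real_inner_smul_left, h11, hu2]; ring
      have hqt : q t = R * Real.sin θ := by
        rw [hq]; simp only [hst, inner_add_left, real_inner_smul_left, h12, h22]; ring
      rw [hpt, hqt]
      linear_combination (R * R) * Real.sin_sq_add_cos_sq θ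
    -- derivatives of the coordinates
    have hdp : ∀ t, |t| < ε → HasDerivAt p ⟪σ₁ t, u₁⟫ t := by
      intro t ht
      simpa using ((h1 t ht).sub_const c).inner ℝ (hasDerivAt_const t u₁)
    have hdq : ∀ t, |t| < ε → HasDerivAt q ⟪σ₁ t, u₂⟫ t := by
      intro t ht
      simpa using ((h1 t ht).sub_const c).inner ℝ (hasDerivAt_const t u₂)
    have hdP1 : ∀ t, |t| < ε → HasDerivAt (fun s => ⟪σ₁ s, u₁⟫) ⟪σ₂ t, u₁⟫ t := by
      intro t ht
      simpa using (h2 t ht).inner ℝ (hasDerivAt_const t u₁)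
    have hdQ1 : ∀ t, |t| < ε → HasDerivAt (fun s => ⟪σ₁ s, u₂⟫) ⟪σ₂ t, u₂⟫ t := by
      intro t ht
      simpa using (h2 t ht).inner ℝ (hasDerivAt_const t u₂)
    have hdP2 : HasDerivAt (fun s => ⟪σ₂ s, u₁⟫) ⟪d₃, u₁⟫ 0 := by
      simpa using h3.inner ℝ (hasDerivAt_const 0 u₁)
    have hdQ2 : HasDerivAt (fun s => ⟪σ₂ s, u₂⟫) ⟪d₃, u₂⟫ 0 := by
      simpa using h3.inner ℝ (hasDerivAt_const 0 u₂)
    -- vector identities from uniqueness of derivatives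
    have hv1 : ∀ t, |t| < ε → σ₁ t = ⟪σ₁ t, u₁⟫ • u₁ + ⟪σ₁ t, u₂⟫ • u₂ := by
      intro t ht
      have hρ : HasDerivAt (fun s => c + p s • u₁ + q s • u₂)
          (⟪σ₁ t, u₁⟫ • u₁ + ⟪σ₁ t, u₂⟫ • u₂) t := by
        have := ((((hdp t ht).smul_const u₁).const_add c).add ((hdq t ht).smul_const u₂))
        exact this
      exact deriv_unique_on ht (h1 t ht) hρ hrep
    have hv2 : ∀ t, |t| < ε → σ₂ t = ⟪σ₂ t, u₁⟫ • u₁ + ⟪σ₂ t, u₂⟫ • u₂ := by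
      intro t ht
      have hρ : HasDerivAt (fun s => ⟪σ₁ s, u₁⟫ • u₁ + ⟪σ₁ s, u₂⟫ • u₂)
          (⟪σ₂ t, u₁⟫ • u₁ + ⟪σ₂ t, u₂⟫ • u₂) t :=
        ((hdP1 t ht).smul_const u₁).add ((hdQ1 t ht).smul_const u₂)
      exact deriv_unique_on ht (h2 t ht) hρ hv1
    have hv3 : d₃ = ⟪d₃, u₁⟫ • u₁ + ⟪d₃, u₂⟫ • u₂ := by
      have hρ : HasDerivAt (fun s => ⟪σ₂ s, u₁⟫ • u₁ + ⟪σ₂ s, u₂⟫ • u₂)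
          (⟪d₃, u₁⟫ • u₁ + ⟪d₃, u₂⟫ • u₂) 0 :=
        (hdP2.smul_const u₁).add (hdQ2.smul_const u₂)
      exact deriv_unique_on h0ε h3 hρ hv2
    -- differentiated radius constraints
    have hr1 : ∀ t, |t| < ε →
        p t * ⟪σ₁ t, u₁⟫ + p t * ⟪σ₁ t, u₁⟫ + (q t * ⟪σ₁ t, u₂⟫ + q t * ⟪σ₁ t, u₂⟫) = 0 := by
      intro t ht
      have hF : HasDerivAt (fun s => p s * p s + q s * q s)
          (p t * ⟪σ₁ t, u₁⟫ + p t * ⟪σ₁ t, u₁⟫ + (q t * ⟪σ₁ t, u₂⟫ + q t * ⟪σ₁ t, u₂⟫)) t := by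
        have := ((hdp t ht).mul (hdp t ht)).add ((hdq t ht).mul (hdq t ht))
        exact this.congr_deriv (by ring)
      exact deriv_unique_on ht hF (hasDerivAt_const t (R * R)) hr0
    have hr1' : ∀ t, |t| < ε →
        p t * ⟪σ₁ t, u₁⟫ + q t * ⟪σ₁ t, u₂⟫ = 0 := by
      intro t ht; have := hr1 t ht; linarith
    have hr2 : ∀ t, |t| < ε →
        ⟪σ₁ t, u₁⟫ * ⟪σ₁ t, u₁⟫ + p t * ⟪σ₂ t, u₁⟫ +
          (⟪σ₁ t, u₂⟫ * ⟪σ₁ t, u₂⟫ + q t * ⟪σ₂ t, u₂⟫) = 0 := by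
      intro t ht
      have hF : HasDerivAt (fun s => p s * ⟪σ₁ s, u₁⟫ + q s * ⟪σ₁ s, u₂⟫)
          (⟪σ₁ t, u₁⟫ * ⟪σ₁ t, u₁⟫ + p t * ⟪σ₂ t, u₁⟫ +
            (⟪σ₁ t, u₂⟫ * ⟪σ₁ t, u₂⟫ + q t * ⟪σ₂ t, u₂⟫)) t :=
        ((hdp t ht).mul (hdP1 t ht)).add ((hdq t ht).mul (hdQ1 t ht))
      exact deriv_unique_on ht hF (hasDerivAt_const t 0) hr1'
    have hr3 : 3 * (⟪σ₁ 0, u₁⟫ * ⟪σ₂ 0, u₁⟫) + p 0 * ⟪d₃, u₁⟫ +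
        (3 * (⟪σ₁ 0, u₂⟫ * ⟪σ₂ 0, u₂⟫) + q 0 * ⟪d₃, u₂⟫) = 0 := by
      have hF : HasDerivAt
          (fun s => ⟪σ₁ s, u₁⟫ * ⟪σ₁ s, u₁⟫ + p s * ⟪σ₂ s, u₁⟫ +
            (⟪σ₁ s, u₂⟫ * ⟪σ₁ s, u₂⟫ + q s * ⟪σ₂ s, u₂⟫))
          (3 * (⟪σ₁ 0, u₁⟫ * ⟪σ₂ 0, u₁⟫) + p 0 * ⟪d₃, u₁⟫ +
            (3 * (⟪σ₁ 0, u₂⟫ * ⟪σ₂ 0, u₂⟫) + q 0 * ⟪d₃, u₂⟫)) 0 := by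
        have t1 : HasDerivAt (fun s => ⟪σ₁ s, u₁⟫ * ⟪σ₁ s, u₁⟫ + p s * ⟪σ₂ s, u₁⟫)
            (3 * (⟪σ₁ 0, u₁⟫ * ⟪σ₂ 0, u₁⟫) + p 0 * ⟪d₃, u₁⟫) 0 := by
          have a := (hdP1 0 h0ε).mul (hdP1 0 h0ε)
          have b := (hdp 0 h0ε).mul hdP2
          exact (a.add b).congr_deriv (by ring)
        have t2 : HasDerivAt (fun s => ⟪σ₁ s, u₂⟫ * ⟪σ₁ s, u₂⟫ + q s * ⟪σ₂ s, u₂⟫)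
            (3 * (⟪σ₁ 0, u₂⟫ * ⟪σ₂ 0, u₂⟫) + q 0 * ⟪d₃, u₂⟫) 0 := by
          have a := (hdQ1 0 h0ε).mul (hdQ1 0 h0ε)
          have b := (hdq 0 h0ε).mul hdQ2
          exact (a.add b).congr_deriv (by ring)
        exact t1.add t2
      have := deriv_unique_on h0ε hF (hasDerivAt_const 0 (0:ℝ)) (fun s hs => hr2 s hs)
      simpa using this
    -- scalar abbreviations
    set P := p 0 with hP
    set Q := q 0 with hQ
    set P1 := (⟪σ₁ 0, u₁⟫ : ℝ) with hP1
    set Q1 := (⟪σ₁ 0, u₂⟫ : ℝ) with hQ1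
    set P2 := (⟪σ₂ 0, u₁⟫ : ℝ) with hP2
    set Q2 := (⟪σ₂ 0, u₂⟫ : ℝ) with hQ2
    set P3 := (⟪d₃, u₁⟫ : ℝ) with hP3
    set Q3 := (⟪d₃, u₂⟫ : ℝ) with hQ3
    have r0 : P * P + Q * Q = R * R := hr0 0 h0ε
    have r1 : P * P1 + Q * Q1 = 0 := hr1' 0 h0ε
    have r2 : P1 * P1 + P * P2 + (Q1 * Q1 + Q * Q2) = 0 := hr2 0 h0ε
    have r3 : 3 * (P1 * P2) + P * P3 + (3 * (Q1 * Q2) + Q * Q3) = 0 := hr3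
    have e1 : σ₁ 0 = P1 • u₁ + Q1 • u₂ := hv1 0 h0ε
    have e2 : σ₂ 0 = P2 • u₁ + Q2 • u₂ := hv2 0 h0ε
    have e3 : d₃ = P3 • u₁ + Q3 • u₂ := hv3
    have hne10 : ¬ (P1 = 0 ∧ Q1 = 0) := by
      rintro ⟨h1', h2'⟩
      apply he; rw [e1, h1', h2']; simp
    clear_value P Q P1 Q1 P2 Q2 P3 Q3
    have hn1 : 0 < P1 * P1 + Q1 * Q1 := by
      rcases eq_or_ne P1 0 with h1' | h1'
      · rcases eq_or_ne Q1 0 with h2' | h2'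
        · exact absurd ⟨h1', h2'⟩ hne10
        · have := mul_self_pos.mpr h2'
          have := mul_self_nonneg P1
          linarith
      · have := mul_self_pos.mpr h1'
        have := mul_self_nonneg Q1
        linarith
    have hd2 : (P1 * Q - Q1 * P) * (P1 * Q - Q1 * P) = (P1 * P1 + Q1 * Q1) * (R * R) := by
      linear_combination (P1 * P1 + Q1 * Q1) * r0 - (P * P1 + Q * Q1) * r1
    have hdne : P1 * Q - Q1 * P ≠ 0 := by
      intro h
      rw [h] at hd2
      have : 0 < (P1 * P1 + Q1 * Q1) * (R * R) := mul_pos hn1 (mul_pos hR hR)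
      simp only [zero_mul] at hd2
      linarith
    have hQZ : P * ((P1*P1+Q1*Q1) * ((P1*P1+Q1*Q1)*P3 - (P3*P1+Q3*Q1)*P1)
          - 3*(P2*P1+Q2*Q1) * ((P1*P1+Q1*Q1)*P2 - (P2*P1+Q2*Q1)*P1))
        + Q * ((P1*P1+Q1*Q1) * ((P1*P1+Q1*Q1)*Q3 - (P3*P1+Q3*Q1)*Q1)
          - 3*(P2*P1+Q2*Q1) * ((P1*P1+Q1*Q1)*Q2 - (P2*P1+Q2*Q1)*Q1)) = 0 := by
      linear_combination ((P1*P1+Q1*Q1)^2) * r3 - (3*(P2*P1+Q2*Q1)*(P1*P1+Q1*Q1)) * r2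
        + (3*(P2*P1+Q2*Q1)^2 - (P1*P1+Q1*Q1)*(P3*P1+Q3*Q1)) * r1
    have hdz1 : (P1 * Q - Q1 * P) * ((P1*P1+Q1*Q1) * ((P1*P1+Q1*Q1)*P3 - (P3*P1+Q3*Q1)*P1)
        - 3*(P2*P1+Q2*Q1) * ((P1*P1+Q1*Q1)*P2 - (P2*P1+Q2*Q1)*P1)) = 0 := by
      linear_combination (-Q1) * hQZ
    have hdz2 : (P1 * Q - Q1 * P) * ((P1*P1+Q1*Q1) * ((P1*P1+Q1*Q1)*Q3 - (P3*P1+Q3*Q1)*Q1)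
        - 3*(P2*P1+Q2*Q1) * ((P1*P1+Q1*Q1)*Q2 - (P2*P1+Q2*Q1)*Q1)) = 0 := by
      linear_combination P1 * hQZ
    have main1 : (P1*P1+Q1*Q1) * ((P1*P1+Q1*Q1)*P3 - (P3*P1+Q3*Q1)*P1)
        = 3*(P2*P1+Q2*Q1) * ((P1*P1+Q1*Q1)*P2 - (P2*P1+Q2*Q1)*P1) := by
      have := (mul_eq_zero.mp hdz1).resolve_left hdne
      linarith
    have main2 : (P1*P1+Q1*Q1) * ((P1*P1+Q1*Q1)*Q3 - (P3*P1+Q3*Q1)*Q1)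
        = 3*(P2*P1+Q2*Q1) * ((P1*P1+Q1*Q1)*Q2 - (P2*P1+Q2*Q1)*Q1) := by
      have := (mul_eq_zero.mp hdz2).resolve_left hdne
      linarith
    rw [e1, e2, e3]
    simp only [inner_add_left, inner_add_right, real_inner_smul_left, real_inner_smul_right,
      h11, h22, h12, hu2, mul_one, mul_zero, add_zero, zero_add]
    match_scalars
    · linear_combination main1
    · linear_combination main2

lemma comp_third_deriv {n : ℕ} {U : Set (EuclideanSpace ℝ (Fin n))} (hU : IsOpen U)
    {f : EuclideanSpace ℝ (Fin n) → EuclideanSpace ℝ (Fin n)}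
    (hf : ContDiffOn ℝ (⊤ : ℕ∞) f U)
    {γ γ₁ γ₂ γ₃ : ℝ → EuclideanSpace ℝ (Fin n)}
    (hγ1 : ∀ t, HasDerivAt γ (γ₁ t) t)
    (hγ2 : ∀ t, HasDerivAt γ₁ (γ₂ t) t)
    (hγ3 : ∀ t, HasDerivAt γ₂ (γ₃ t) t)
    (hx : γ 0 ∈ U) :
    ∃ ε > 0, (∀ t, |t| < ε → γ t ∈ U) ∧
      (∀ t, |t| < ε → HasDerivAt (fun s => f (γ s)) (fderiv ℝ f (γ t) (γ₁ t)) t) ∧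
      (∀ t, |t| < ε → HasDerivAt (fun s => fderiv ℝ f (γ s) (γ₁ s))
        (fderiv ℝ (fderiv ℝ f) (γ t) (γ₁ t) (γ₁ t) + fderiv ℝ f (γ t) (γ₂ t)) t) ∧
      HasDerivAt (fun s => fderiv ℝ (fderiv ℝ f) (γ s) (γ₁ s) (γ₁ s) + fderiv ℝ f (γ s) (γ₂ s))
        (fderiv ℝ (fderiv ℝ (fderiv ℝ f)) (γ 0) (γ₁ 0) (γ₁ 0) (γ₁ 0)
          + fderiv ℝ (fderiv ℝ f) (γ 0) (γ₂ 0) (γ₁ 0)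
          + fderiv ℝ (fderiv ℝ f) (γ 0) (γ₁ 0) (γ₂ 0)
          + (fderiv ℝ (fderiv ℝ f) (γ 0) (γ₁ 0) (γ₂ 0) + fderiv ℝ f (γ 0) (γ₃ 0))) 0 := by
  -- differentiability facts
  have hCD : ∀ y ∈ U, ContDiffAt ℝ (⊤ : ℕ∞) f y := fun y hy => hf.contDiffAt (hU.mem_nhds hy)
  have hfd : ∀ y ∈ U, HasFDerivAt f (fderiv ℝ f y) y := fun y hy =>
    ((hCD y hy).differentiableAt (by simp)).hasFDerivAt
  have hCD1 : ∀ y ∈ U, ContDiffAt ℝ (⊤ : ℕ∞) (fderiv ℝ f) y := fun y hy =>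
    (hCD y hy).fderiv_right (by simp)
  have hgd : ∀ y ∈ U, HasFDerivAt (fderiv ℝ f) (fderiv ℝ (fderiv ℝ f) y) y := fun y hy =>
    ((hCD1 y hy).differentiableAt (by simp)).hasFDerivAt
  have hCD2 : ContDiffAt ℝ (⊤ : ℕ∞) (fderiv ℝ (fderiv ℝ f)) (γ 0) :=
    (hCD1 _ hx).fderiv_right (by simp)
  have hg2d : HasFDerivAt (fderiv ℝ (fderiv ℝ f)) (fderiv ℝ (fderiv ℝ (fderiv ℝ f)) (γ 0))
      (γ 0) := (hCD2.differentiableAt (by simp)).hasFDerivAt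
  -- find ε
  have hnhds : γ ⁻¹' U ∈ nhds (0 : ℝ) :=
    (hγ1 0).continuousAt.preimage_mem_nhds (hU.mem_nhds hx)
  obtain ⟨ε, hε, hball⟩ := Metric.mem_nhds_iff.mp hnhds
  have hmem : ∀ t, |t| < ε → γ t ∈ U := by
    intro t ht
    apply hball
    simpa [Real.dist_eq] using ht
  refine ⟨ε, hε, hmem, ?_, ?_, ?_⟩
  · intro t ht
    exact (hfd (γ t) (hmem t ht)).comp_hasDerivAt t (hγ1 t)
  · intro t ht
    have hG : HasDerivAt (fun s => fderiv ℝ f (γ s)) (fderiv ℝ (fderiv ℝ f) (γ t) (γ₁ t)) t :=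
      (hgd (γ t) (hmem t ht)).comp_hasDerivAt t (hγ1 t)
    exact hG.clm_apply (hγ2 t)
  · have h0 : |(0:ℝ)| < ε := by simpa using hε
    have hG2 : HasDerivAt (fun s => fderiv ℝ (fderiv ℝ f) (γ s))
        (fderiv ℝ (fderiv ℝ (fderiv ℝ f)) (γ 0) (γ₁ 0)) 0 :=
      by have := HasFDerivAt.comp_hasDerivAt (l := fderiv ℝ (fderiv ℝ f)) 0 hg2d (hγ1 0); exact this
    have hH : HasDerivAt (fun s => fderiv ℝ (fderiv ℝ f) (γ s) (γ₁ s))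
        (fderiv ℝ (fderiv ℝ (fderiv ℝ f)) (γ 0) (γ₁ 0) (γ₁ 0)
          + fderiv ℝ (fderiv ℝ f) (γ 0) (γ₂ 0)) 0 :=
      hG2.clm_apply (hγ2 0)
    have hT1 : HasDerivAt (fun s => fderiv ℝ (fderiv ℝ f) (γ s) (γ₁ s) (γ₁ s))
        (fderiv ℝ (fderiv ℝ (fderiv ℝ f)) (γ 0) (γ₁ 0) (γ₁ 0) (γ₁ 0)
          + fderiv ℝ (fderiv ℝ f) (γ 0) (γ₂ 0) (γ₁ 0)
          + fderiv ℝ (fderiv ℝ f) (γ 0) (γ₁ 0) (γ₂ 0)) 0 := by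
      have := hH.clm_apply (hγ2 0)
      exact this.congr_deriv (by simp [ContinuousLinearMap.add_apply])
    have hG0 : HasDerivAt (fun s => fderiv ℝ f (γ s)) (fderiv ℝ (fderiv ℝ f) (γ 0) (γ₁ 0)) 0 :=
      (hgd (γ 0) hx).comp_hasDerivAt 0 (hγ1 0)
    have hT2 : HasDerivAt (fun s => fderiv ℝ f (γ s) (γ₂ s))
        (fderiv ℝ (fderiv ℝ f) (γ 0) (γ₁ 0) (γ₂ 0) + fderiv ℝ f (γ 0) (γ₃ 0)) 0 :=
      hG0.clm_apply (hγ3 0)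
    exact hT1.add hT2


-- curve derivative facts
section curves
variable {n : ℕ} (x v u : EuclideanSpace ℝ (Fin n))

lemma curve0_deriv1 : ∀ t : ℝ, HasDerivAt (fun s : ℝ => x + s • v) v t := by
  intro t
  simpa using ((hasDerivAt_id t).smul_const v).const_add x

lemma curvep_deriv1 : ∀ t : ℝ, HasDerivAt (fun s : ℝ => x + Real.sin s • v + (1 - Real.cos s) • u)
    (Real.cos t • v + Real.sin t • u) t := by
  intro t
  have h1 := ((Real.hasDerivAt_sin t).smul_const v).const_add x
  have h2 := (((hasDerivAt_const t (1:ℝ)).sub (Real.hasDerivAt_cos t)).smul_const u)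
  have := h1.add h2
  exact this.congr_deriv (by module)

lemma curvep_deriv2 : ∀ t : ℝ, HasDerivAt (fun s : ℝ => Real.cos s • v + Real.sin s • u)
    ((-Real.sin t) • v + Real.cos t • u) t := by
  intro t
  exact ((Real.hasDerivAt_cos t).smul_const v).add ((Real.hasDerivAt_sin t).smul_const u)

lemma curvep_deriv3 : ∀ t : ℝ, HasDerivAt (fun s : ℝ => (-Real.sin s) • v + Real.cos s • u)
    ((-Real.cos t) • v + (-Real.sin t) • u) t := by
  intro t
  have h1 := ((Real.hasDerivAt_sin t).neg.smul_const v)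
  have h2 := (Real.hasDerivAt_cos t).smul_const u
  exact h1.add h2

lemma curvem_deriv1 : ∀ t : ℝ, HasDerivAt (fun s : ℝ => x + Real.sin s • v + (Real.cos s - 1) • u)
    (Real.cos t • v + (-Real.sin t) • u) t := by
  intro t
  have h1 := ((Real.hasDerivAt_sin t).smul_const v).const_add x
  have h2 := (((Real.hasDerivAt_cos t).sub (hasDerivAt_const t (1:ℝ))).smul_const u)
  have := h1.add h2
  exact this.congr_deriv (by module)

lemma curvem_deriv2 : ∀ t : ℝ, HasDerivAt (fun s : ℝ => Real.cos s • v + (-Real.sin s) • u)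
    ((-Real.sin t) • v + (-Real.cos t) • u) t := by
  intro t
  exact ((Real.hasDerivAt_cos t).smul_const v).add ((Real.hasDerivAt_sin t).neg.smul_const u)

lemma curvem_deriv3 : ∀ t : ℝ, HasDerivAt (fun s : ℝ => (-Real.sin s) • v + (-Real.cos s) • u)
    ((-Real.cos t) • v + Real.sin t • u) t := by
  intro t
  have h1 := (Real.hasDerivAt_sin t).neg.smul_const v
  have h2 := (Real.hasDerivAt_cos t).neg.smul_const u
  have := h1.add h2
  exact this.congr_deriv (by module)

end curves

section circles
variable {n : ℕ} (x : EuclideanSpace ℝ (Fin n)) {v u : EuclideanSpace ℝ (Fin n)}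

lemma curve0_circle (hv : v ≠ 0) :
    IsFlatConformalCircle (Set.range fun t : ℝ => x + t • v) := Or.inl ⟨x, v, hv, rfl⟩

lemma curvep_circle (hvv : ⟪v, v⟫ = 1) (huu : ⟪u, u⟫ = 1) (hvu : ⟪v, u⟫ = 0) :
    IsFlatConformalCircle
      (Set.range fun t : ℝ => x + Real.sin t • v + (1 - Real.cos t) • u) := by
  right
  refine ⟨x + u, -u, v, 1, one_pos, ?_, hvv, ?_, ?_⟩
  · simpa [inner_neg_neg] using huu
  · rw [inner_neg_left, real_inner_comm, hvu, neg_zero]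
  · have : (fun t : ℝ => x + Real.sin t • v + (1 - Real.cos t) • u)
        = fun t : ℝ => (x + u) + (1 * Real.cos t) • (-u) + (1 * Real.sin t) • v := by
      funext t; module
    rw [this]

lemma curvem_circle (hvv : ⟪v, v⟫ = 1) (huu : ⟪u, u⟫ = 1) (hvu : ⟪v, u⟫ = 0) :
    IsFlatConformalCircle
      (Set.range fun t : ℝ => x + Real.sin t • v + (Real.cos t - 1) • u) := by
  right
  refine ⟨x - u, u, v, 1, one_pos, huu, hvv, ?_, ?_⟩
  · rw [real_inner_comm, hvu]
  · have : (fun t : ℝ => x + Real.sin t • v + (Real.cos t - 1) • u)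
        = fun t : ℝ => (x - u) + (1 * Real.cos t) • u + (1 * Real.sin t) • v := by
      funext t; module
    rw [this]

end circles


lemma key_orthogonal {n : ℕ} {U : Set (EuclideanSpace ℝ (Fin n))} (hU : IsOpen U)
    {f : EuclideanSpace ℝ (Fin n) → EuclideanSpace ℝ (Fin n)}
    (hf : ContDiffOn ℝ (⊤ : ℕ∞) f U)
    (hinj : ∀ x ∈ U, Function.Injective (fderiv ℝ f x))
    (hmap : ∀ C : Set (EuclideanSpace ℝ (Fin n)), IsFlatConformalCircle C →
      (C ∩ U).Nonempty →
      ∃ C', IsFlatConformalCircle C' ∧ f '' (C ∩ U) ⊆ C')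
    {x : EuclideanSpace ℝ (Fin n)} (hx : x ∈ U) {v u : EuclideanSpace ℝ (Fin n)}
    (hvv : ⟪v, v⟫ = 1) (huu : ⟪u, u⟫ = 1) (hvu : ⟪v, u⟫ = 0) :
    ⟪fderiv ℝ f x u, fderiv ℝ f x v⟫ = 0 := by
  have hv0 : v ≠ 0 := by intro h; rw [h] at hvv; simp at hvv
  have hAv : fderiv ℝ f x v ≠ 0 := by
    intro h
    exact hv0 (hinj x hx (by simpa using h))
  -- curve 0 : the straight line
  have E0 : True := trivial
  obtain ⟨ε₀, hε₀, hmem₀, hD01, hD02, hD03⟩ :=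
    comp_third_deriv hU hf (curve0_deriv1 x v)
      (fun t => hasDerivAt_const t v) (fun t => hasDerivAt_const t 0) (by simpa using hx)
  obtain ⟨C0, hC0, hsub0⟩ := hmap _ (curve0_circle x hv0) ⟨x, ⟨0, by simp⟩, hx⟩
  have hmemC0 : ∀ t, |t| < ε₀ → f ((fun s : ℝ => x + s • v) t) ∈ C0 :=
    fun t ht => hsub0 ⟨_, ⟨⟨t, rfl⟩, hmem₀ t ht⟩, rfl⟩
  have hne0 : fderiv ℝ f ((fun s : ℝ => x + s • v) 0) v ≠ 0 := by simpa using hAv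
  have e0 := key_constraint hC0 hε₀ hD01 hD02 hD03 hmemC0 hne0
  -- curve plus
  obtain ⟨εp, hεp, hmemp, hDp1, hDp2, hDp3⟩ :=
    comp_third_deriv hU hf (curvep_deriv1 x v u) (curvep_deriv2 v u) (curvep_deriv3 v u)
      (by simpa using hx)
  obtain ⟨Cp, hCp, hsubp⟩ := hmap _ (curvep_circle x hvv huu hvu) ⟨x, ⟨0, by simp⟩, hx⟩
  have hmemCp : ∀ t, |t| < εp →
      f ((fun s : ℝ => x + Real.sin s • v + (1 - Real.cos s) • u) t) ∈ Cp :=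
    fun t ht => hsubp ⟨_, ⟨⟨t, rfl⟩, hmemp t ht⟩, rfl⟩
  have hnep : fderiv ℝ f ((fun s : ℝ => x + Real.sin s • v + (1 - Real.cos s) • u) 0)
      (Real.cos 0 • v + Real.sin 0 • u) ≠ 0 := by simpa using hAv
  have ep := key_constraint hCp hεp hDp1 hDp2 hDp3 hmemCp hnep
  -- curve minus
  obtain ⟨εm, hεm, hmemm, hDm1, hDm2, hDm3⟩ :=
    comp_third_deriv hU hf (curvem_deriv1 x v u) (curvem_deriv2 v u) (curvem_deriv3 v u)
      (by simpa using hx)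
  obtain ⟨Cm, hCm, hsubm⟩ := hmap _ (curvem_circle x hvv huu hvu) ⟨x, ⟨0, by simp⟩, hx⟩
  have hmemCm : ∀ t, |t| < εm →
      f ((fun s : ℝ => x + Real.sin s • v + (Real.cos s - 1) • u) t) ∈ Cm :=
    fun t ht => hsubm ⟨_, ⟨⟨t, rfl⟩, hmemm t ht⟩, rfl⟩
  have hnem : fderiv ℝ f ((fun s : ℝ => x + Real.sin s • v + (Real.cos s - 1) • u) 0)
      (Real.cos 0 • v + (-Real.sin 0) • u) ≠ 0 := by simpa using hAv
  have em := key_constraint hCm hεm hDm1 hDm2 hDm3 hmemCm hnem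
  -- normalize the three equations
  simp only [Real.sin_zero, Real.cos_zero, zero_smul, add_zero, map_zero, one_smul,
    sub_self, neg_zero, zero_add, neg_smul, map_neg, ContinuousLinearMap.zero_apply,
    ContinuousLinearMap.neg_apply, inner_add_left, inner_sub_left, inner_neg_left,
    inner_add_right, inner_sub_right, inner_neg_right] at e0 ep em
  -- combine
  have hfinal : (6 * ⟪fderiv ℝ f x u, fderiv ℝ f x v⟫) •
      (⟪fderiv ℝ f x v, fderiv ℝ f x v⟫ • fderiv ℝ f x u
        - ⟪fderiv ℝ f x u, fderiv ℝ f x v⟫ • fderiv ℝ f x v) = 0 := by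
    linear_combination (norm := module) (2:ℝ) • e0 - ep - em
  rcases smul_eq_zero.mp hfinal with h | h
  · linarith
  · exfalso
    have h' : fderiv ℝ f x (⟪fderiv ℝ f x v, fderiv ℝ f x v⟫ • u) =
        fderiv ℝ f x (⟪fderiv ℝ f x u, fderiv ℝ f x v⟫ • v) := by
      simp only [map_smul]
      rw [sub_eq_zero] at h
      exact h
    have h2 := hinj x hx h'
    have h3 : ⟪(⟪fderiv ℝ f x v, fderiv ℝ f x v⟫ • u : EuclideanSpace ℝ (Fin n)), u⟫ =
        ⟪(⟪fderiv ℝ f x u, fderiv ℝ f x v⟫ • v : EuclideanSpace ℝ (Fin n)), u⟫ := by rw [h2]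
    rw [real_inner_smul_left, real_inner_smul_left, huu, hvu] at h3
    have h4 : fderiv ℝ f x v = 0 := by
      have : ⟪fderiv ℝ f x v, fderiv ℝ f x v⟫ = 0 := by linarith
      exact inner_self_eq_zero.mp this
    exact hAv h4


/-- Flat-model case of Theorem 2.1: a local diffeomorphism `f : U → ℝⁿ` (n ≥ 3) mapping
every conformal circle of the flat metric (line or round circle) into a line or round
circle has, at each point, a conformal differential: `⟨df v, df u⟩ = 0` whenever
`⟨v,u⟩ = 0`, and indeed `⟨df v, df u⟩ = c ⟨v,u⟩` for some `c > 0`. -/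
theorem stmt12 (n : ℕ) (hn : 3 ≤ n)
    (U : Set (EuclideanSpace ℝ (Fin n))) (hU : IsOpen U)
    (f : EuclideanSpace ℝ (Fin n) → EuclideanSpace ℝ (Fin n))
    (hf : ContDiffOn ℝ (⊤ : ℕ∞) f U)
    (hinj : ∀ x ∈ U, Function.Injective (fderiv ℝ f x))
    (hmap : ∀ C : Set (EuclideanSpace ℝ (Fin n)), IsFlatConformalCircle C →
      (C ∩ U).Nonempty →
      ∃ C', IsFlatConformalCircle C' ∧ f '' (C ∩ U) ⊆ C') :
    ∀ x ∈ U,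
      (∀ v u : EuclideanSpace ℝ (Fin n), ⟪v, u⟫ = 0 →
        ⟪fderiv ℝ f x v, fderiv ℝ f x u⟫ = 0) ∧
      ∃ c : ℝ, 0 < c ∧ ∀ v u : EuclideanSpace ℝ (Fin n),
        ⟪fderiv ℝ f x v, fderiv ℝ f x u⟫ = c * ⟪v, u⟫ := by
  intro x hx
  have horth : ∀ v u : EuclideanSpace ℝ (Fin n), ⟪v, u⟫ = 0 →
      ⟪fderiv ℝ f x v, fderiv ℝ f x u⟫ = 0 := by
    intro v u hvu
    rcases eq_or_ne v 0 with rfl | hv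
    · simp
    rcases eq_or_ne u 0 with rfl | hu
    · simp
    have hnv : ‖v‖ ≠ 0 := norm_ne_zero_iff.mpr hv
    have hnu : ‖u‖ ≠ 0 := norm_ne_zero_iff.mpr hu
    have hv' : ⟪(‖v‖⁻¹ • v : EuclideanSpace ℝ (Fin n)), (‖v‖⁻¹ • v : EuclideanSpace ℝ (Fin n))⟫
        = 1 := by
      rw [real_inner_smul_left, real_inner_smul_right, real_inner_self_eq_norm_sq]
      field_simp
    have hu' : ⟪(‖u‖⁻¹ • u : EuclideanSpace ℝ (Fin n)), (‖u‖⁻¹ • u : EuclideanSpace ℝ (Fin n))⟫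
        = 1 := by
      rw [real_inner_smul_left, real_inner_smul_right, real_inner_self_eq_norm_sq]
      field_simp
    have hvu' : ⟪(‖v‖⁻¹ • v : EuclideanSpace ℝ (Fin n)), (‖u‖⁻¹ • u : EuclideanSpace ℝ (Fin n))⟫
        = 0 := by
      rw [real_inner_smul_left, real_inner_smul_right, hvu]
      ring
    have key := key_orthogonal hU hf hinj hmap hx hv' hu' hvu'
    rw [map_smul, map_smul, real_inner_smul_left, real_inner_smul_right] at key
    rcases mul_eq_zero.mp key with h | h
    · exact absurd h (inv_ne_zero hnu)
    rcases mul_eq_zero.mp h with h' | h'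
    · exact absurd h' (inv_ne_zero hnv)
    · rw [real_inner_comm]; exact h'
  refine ⟨horth, ?_⟩
  have h3 : 0 < n := by omega
  set w₀ : EuclideanSpace ℝ (Fin n) := EuclideanSpace.single ⟨0, h3⟩ 1 with hw₀def
  have hw₀ : ⟪w₀, w₀⟫ = 1 := by
    simp [hw₀def, EuclideanSpace.inner_single_left, EuclideanSpace.single_apply]
  have hw₀ne : w₀ ≠ 0 := by
    intro h; rw [h] at hw₀; simp at hw₀
  set c := (⟪fderiv ℝ f x w₀, fderiv ℝ f x w₀⟫ : ℝ) with hcdef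
  have hcpos : 0 < c := by
    have hne : fderiv ℝ f x w₀ ≠ 0 := by
      intro h
      exact hw₀ne (hinj x hx (by simpa using h))
    have h0 : c ≠ 0 := fun h => hne (inner_self_eq_zero.mp h)
    have h1 : 0 ≤ c := real_inner_self_nonneg
    exact lt_of_le_of_ne h1 (Ne.symm h0)
  have hunit : ∀ w : EuclideanSpace ℝ (Fin n), ⟪w, w⟫ = 1 →
      ⟪fderiv ℝ f x w, fderiv ℝ f x w⟫ = c := by
    intro w hw
    have ho : ⟪(w + w₀ : EuclideanSpace ℝ (Fin n)), (w - w₀ : EuclideanSpace ℝ (Fin n))⟫ = 0 := by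
      simp only [inner_add_left, inner_sub_right]
      rw [hw, hw₀, real_inner_comm w₀ w]
      ring
    have h := horth _ _ ho
    rw [map_add, map_sub] at h
    simp only [inner_add_left, inner_sub_right] at h
    rw [real_inner_comm (fderiv ℝ f x w₀) (fderiv ℝ f x w)] at h
    rw [← hcdef] at h
    linarith
  have hsq : ∀ w : EuclideanSpace ℝ (Fin n),
      ⟪fderiv ℝ f x w, fderiv ℝ f x w⟫ = c * ⟪w, w⟫ := by
    intro w
    rcases eq_or_ne w 0 with rfl | hw
    · simp
    · have hnw : ‖w‖ ≠ 0 := norm_ne_zero_iff.mpr hw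
      have h1 : ⟪(‖w‖⁻¹ • w : EuclideanSpace ℝ (Fin n)),
          (‖w‖⁻¹ • w : EuclideanSpace ℝ (Fin n))⟫ = 1 := by
        rw [real_inner_smul_left, real_inner_smul_right, real_inner_self_eq_norm_sq]
        field_simp
      have h2 := hunit _ h1
      rw [map_smul, real_inner_smul_left, real_inner_smul_right] at h2
      rw [real_inner_self_eq_norm_sq w]
      have hns : (‖w‖ : ℝ) ^ 2 ≠ 0 := pow_ne_zero 2 hnw
      field_simp at h2 ⊢
      nlinarith [h2]
  refine ⟨c, hcpos, ?_⟩
  intro v u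
  have h1 := hsq (v + u)
  have h2 := hsq v
  have h3 := hsq u
  rw [map_add] at h1
  simp only [inner_add_left, inner_add_right] at h1
  have h4 := real_inner_comm (fderiv ℝ f x v) (fderiv ℝ f x u)
  have h5 : c * ⟪u, v⟫ = c * ⟪v, u⟫ := by rw [real_inner_comm u v]
  ring_nf at h1
  linarith
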